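/- (Positive spectral gap implies existence of a Green function) Assume λ₁(X) := λ₁(X, −Δ) > 0 (principal eigenvalue of the Laplacian, with potential Q = 0). Then X possesses a global Green function: there exists G : X × X → [0,∞) such that for each y ∈ X, Δ_x G(x,y) = −δ_y(x) for all x ∈ X. -/

import Mathlib

open Finset Filter

noncomputable section

variable {V : Type*}

/-- The (weighted) degree `d_x = ∑_{(x,y) ∈ E} μ_{xy}` of a vertex `x` in a locally
finite graph `G` with edge weights `μ`. -/
def deg (G : SimpleGraph V) [G.LocallyFinite] (μ : V → V → ℝ) (x : V) : ℝ :=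
  ∑ y ∈ G.neighborFinset x, μ x y

/-- The graph Laplacian `(Δu)(x) = ∑_{(x,y) ∈ E} (μ_{xy}/d_x) (u(y) - u(x))`. -/
def lap (G : SimpleGraph V) [G.LocallyFinite] (μ : V → V → ℝ) (u : V → ℝ) (x : V) : ℝ :=
  ∑ y ∈ G.neighborFinset x, μ x y / deg G μ x * (u y - u x)

/-- The squared gradient `|∇u|²(x) = ∑_{(x,y) ∈ E} (μ_{xy}/d_x) (u(y) - u(x))²`. -/
def gradSq (G : SimpleGraph V) [G.LocallyFinite] (μ : V → V → ℝ) (u : V → ℝ) (x : V) : ℝ :=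
  ∑ y ∈ G.neighborFinset x, μ x y / deg G μ x * (u y - u x) ^ 2

/-- `d̂_x = sup_{(x,y) ∈ E} d_x / μ_{xy}`. -/
def dhat (G : SimpleGraph V) [G.LocallyFinite] (μ : V → V → ℝ) (x : V) : ℝ :=
  sSup {r : ℝ | ∃ y, G.Adj x y ∧ r = deg G μ x / μ x y}

/-- The principal (Dirichlet) eigenvalue `λ₁(D, -Δ+Q)` of a finite subset `D ⊆ X`:
the infimum of the Rayleigh quotients `(∫_D (-Δu + Qu)·u) / (∫_D u²)` over test
functions `u` not identically zero on `D` and vanishing outside `D`, where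
`∫_S f = ∑_{x ∈ S} f(x) d_x`. -/
def lambda1 (G : SimpleGraph V) [G.LocallyFinite] (μ : V → V → ℝ) (Q : V → ℝ)
    (D : Finset V) : ℝ :=
  sInf {r : ℝ | ∃ u : V → ℝ, (∃ x ∈ D, u x ≠ 0) ∧ (∀ x, x ∉ D → u x = 0) ∧
    r = (∑ x ∈ D, (-lap G μ u x + Q x * u x) * u x * deg G μ x) /
        (∑ x ∈ D, (u x) ^ 2 * deg G μ x)}

/-- `λ₁(X, -Δ+Q)`: the limit of `λ₁(D_j, -Δ+Q)` along any exhaustion of `X` by finite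
subsets; by monotonicity this equals the infimum of `λ₁(D, -Δ+Q)` over all nonempty
finite subsets `D` of `X`. -/
def lambda1Top (G : SimpleGraph V) [G.LocallyFinite] (μ : V → V → ℝ) (Q : V → ℝ) : ℝ :=
  sInf {r : ℝ | ∃ D : Finset V, D.Nonempty ∧ r = lambda1 G μ Q D}

set_option linter.unusedSectionVars false

section Aux

variable [Infinite V] (G : SimpleGraph V) [G.LocallyFinite] (μ : V → V → ℝ)
  (hpos : ∀ x y, G.Adj x y → 0 < μ x y) (hconn : G.Connected)

include hconn in
lemma exists_adj (x : V) : ∃ z, G.Adj x z := by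
  obtain ⟨z, hz⟩ := exists_ne x
  obtain ⟨w⟩ := hconn.preconnected x z
  cases w with
  | nil => exact absurd rfl hz
  | cons h p => exact ⟨_, h⟩

include hpos hconn in
lemma deg_pos (x : V) : 0 < deg G μ x := by
  obtain ⟨z, hz⟩ := exists_adj G hconn x
  exact Finset.sum_pos (fun w hw => hpos x w ((G.mem_neighborFinset x w).mp hw))
    ⟨z, (G.mem_neighborFinset x z).mpr hz⟩

omit [Infinite V] in
lemma lap_sub (u v : V → ℝ) (x : V) :
    lap G μ (u - v) x = lap G μ u x - lap G μ v x := by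
  simp only [lap, ← Finset.sum_sub_distrib]
  exact Finset.sum_congr rfl fun w _ => by simp [Pi.sub_apply]; ring

include hpos hconn in
lemma min_principle (u : V → ℝ) (D : Finset V)
    (hout : ∀ x ∉ D, 0 ≤ u x)
    (hin : ∀ x ∈ D, lap G μ u x ≤ 0) :
    ∀ x, 0 ≤ u x := by
  by_contra hcon
  push_neg at hcon
  obtain ⟨x₀, hx₀⟩ := hcon
  have hx₀D : x₀ ∈ D := by
    by_contra h'; exact absurd (hout _ h') (not_le.2 hx₀)
  obtain ⟨xs, hxsD, hminx⟩ := D.exists_min_image u ⟨x₀, hx₀D⟩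
  set m := u xs with hm
  have hmneg : m < 0 := lt_of_le_of_lt (hminx x₀ hx₀D) hx₀
  have hlb : ∀ z, m ≤ u z := by
    intro z
    by_cases hz : z ∈ D
    · exact hminx z hz
    · exact le_of_lt (lt_of_lt_of_le hmneg (hout z hz))
  have step : ∀ z, u z = m → ∀ z', G.Adj z z' → u z' = m := by
    intro z hz z' hadj
    have hzD : z ∈ D := by
      by_contra h'
      have := hout z h'
      rw [hz] at this; linarith
    have hdz : 0 < deg G μ z := deg_pos G μ hpos hconn z
    have hterm : ∀ w ∈ G.neighborFinset z, 0 ≤ μ z w / deg G μ z * (u w - u z) := by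
      intro w hw
      have : 0 < μ z w := hpos z w ((G.mem_neighborFinset z w).mp hw)
      have h2 : 0 ≤ u w - u z := by rw [hz]; linarith [hlb w]
      positivity
    have hsum0 : lap G μ u z = 0 :=
      le_antisymm (hin z hzD) (Finset.sum_nonneg hterm)
    have hz' := (Finset.sum_eq_zero_iff_of_nonneg hterm).mp hsum0 z'
      ((G.mem_neighborFinset z z').mpr hadj)
    have hμ : 0 < μ z z' := hpos z z' hadj
    have : u z' - u z = 0 := by
      have hne : μ z z' / deg G μ z ≠ 0 := by positivity
      exact (mul_eq_zero.mp hz').resolve_left hne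
    rw [hz] at this; linarith
  have walk : ∀ (a b : V), G.Walk a b → u a = m → u b = m := by
    intro a b p
    induction p with
    | nil => exact id
    | cons hadj p ih => intro h; exact ih (step _ h _ hadj)
  obtain ⟨w, hw⟩ := Infinite.exists_notMem_finset D
  obtain ⟨p⟩ := hconn.preconnected xs w
  have h1 : u w = m := walk _ _ p rfl
  have h2 : 0 ≤ u w := hout w hw
  linarith

end Aux


section Spectral

variable (G : SimpleGraph V) [G.LocallyFinite] (μ : V → V → ℝ)

lemma lam_lb (hl : 0 < lambda1Top G μ (fun _ => 0)) (D : Finset V) (hD : D.Nonempty) :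
    lambda1Top G μ (fun _ => 0) ≤ lambda1 G μ (fun _ => 0) D := by
  have hbdd : BddBelow {r : ℝ | ∃ D : Finset V, D.Nonempty ∧ r = lambda1 G μ (fun _ => 0) D} := by
    by_contra h
    rw [lambda1Top, Real.sInf_of_not_bddBelow h] at hl
    exact lt_irrefl 0 hl
  exact csInf_le hbdd ⟨D, hD, rfl⟩

lemma lambda1_le_quot (hl : 0 < lambda1Top G μ (fun _ => 0)) (D : Finset V) (u : V → ℝ)
    (hx : ∃ x ∈ D, u x ≠ 0) (hout : ∀ x, x ∉ D → u x = 0) :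
    lambda1 G μ (fun _ => 0) D ≤
      (∑ x ∈ D, (-lap G μ u x) * u x * deg G μ x) / (∑ x ∈ D, (u x) ^ 2 * deg G μ x) := by
  have hmem : (∑ x ∈ D, (-lap G μ u x) * u x * deg G μ x) /
      (∑ x ∈ D, (u x) ^ 2 * deg G μ x) ∈
      {r : ℝ | ∃ u : V → ℝ, (∃ x ∈ D, u x ≠ 0) ∧ (∀ x, x ∉ D → u x = 0) ∧
        r = (∑ x ∈ D, (-lap G μ u x + (fun _ => (0:ℝ)) x * u x) * u x * deg G μ x) /
            (∑ x ∈ D, (u x) ^ 2 * deg G μ x)} := ⟨u, hx, hout, by simp⟩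
  by_cases hb : BddBelow {r : ℝ | ∃ u : V → ℝ, (∃ x ∈ D, u x ≠ 0) ∧ (∀ x, x ∉ D → u x = 0) ∧
        r = (∑ x ∈ D, (-lap G μ u x + (fun _ => (0:ℝ)) x * u x) * u x * deg G μ x) /
            (∑ x ∈ D, (u x) ^ 2 * deg G μ x)}
  · exact csInf_le hb hmem
  · obtain ⟨x₀, hx₀, -⟩ := hx
    have h2 := lam_lb G μ hl D ⟨x₀, hx₀⟩
    rw [lambda1, Real.sInf_of_not_bddBelow hb] at h2 ⊢
    linarith

lemma infinite_of_hl (hl : 0 < lambda1Top G μ (fun _ => 0)) : Infinite V := by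
  by_contra hfin
  rw [not_infinite_iff_finite] at hfin
  haveI := Fintype.ofFinite V
  cases isEmpty_or_nonempty V with
  | inl he =>
    have hempty : {r : ℝ | ∃ D : Finset V, D.Nonempty ∧ r = lambda1 G μ (fun _ => 0) D} = ∅ := by
      ext r
      simp only [Set.mem_setOf_eq, Set.mem_empty_iff_false, iff_false]
      rintro ⟨D, ⟨x, -⟩, -⟩
      exact he.false x
    rw [lambda1Top, hempty, Real.sInf_empty] at hl
    exact lt_irrefl 0 hl
  | inr hne =>
    have h1 := lambda1_le_quot G μ hl Finset.univ (fun _ => 1)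
      ⟨hne.some, Finset.mem_univ _, one_ne_zero⟩ (fun x hx => absurd (Finset.mem_univ x) hx)
    have hlapc : ∀ x : V, lap G μ (fun _ => (1:ℝ)) x = 0 := by
      intro x; simp [lap]
    have hnum : (∑ x ∈ Finset.univ, (-lap G μ (fun _ => (1:ℝ)) x) * (1:ℝ) * deg G μ x) = 0 := by
      apply Finset.sum_eq_zero
      intro x _
      rw [hlapc x]; ring
    rw [hnum, zero_div] at h1
    have h2 := lam_lb G μ hl Finset.univ ⟨hne.some, Finset.mem_univ _⟩
    linarith

end Spectral

section Exist

variable [Infinite V] [DecidableEq V] (G : SimpleGraph V) [G.LocallyFinite] (μ : V → V → ℝ)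
  (hpos : ∀ x y, G.Adj x y → 0 < μ x y) (hconn : G.Connected)

omit [Infinite V] [DecidableEq V] in
lemma lap_add' (u v : V → ℝ) (x : V) :
    lap G μ (fun z => u z + v z) x = lap G μ u x + lap G μ v x := by
  simp only [lap, ← Finset.sum_add_distrib]
  exact Finset.sum_congr rfl fun w _ => by ring

omit [Infinite V] [DecidableEq V] in
lemma lap_smul' (a : ℝ) (u : V → ℝ) (x : V) :
    lap G μ (fun z => a * u z) x = a * lap G μ u x := by
  simp only [lap, Finset.mul_sum]
  exact Finset.sum_congr rfl fun w _ => by ring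

include hpos hconn in
lemma exists_green_on (hl : 0 < lambda1Top G μ (fun _ => 0)) (D : Finset V) (y : V)
    (hy : y ∈ D) :
    ∃ u : V → ℝ, (∀ x, x ∉ D → u x = 0) ∧
      (∀ x ∈ D, lap G μ u x = -(if x = y then 1 else 0)) ∧
      (∀ x, 0 ≤ u x) ∧
      (∀ x, (lambda1Top G μ (fun _ => 0)) ^ 2 * ((u x) ^ 2 * deg G μ x) ≤ deg G μ y) := by
  classical
  set c := lambda1Top G μ (fun _ => 0) with hcdef
  set ext : (↥D → ℝ) → (V → ℝ) := fun v x => if h : x ∈ D then v ⟨x, h⟩ else 0 with hext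
  have hext_eq : ∀ (v w : ↥D → ℝ) (a b : ℝ) (x : V),
      ext (a • v + b • w) x = a * ext v x + b * ext w x := by
    intro v w a b x
    simp only [hext]
    split
    · simp
    · simp
  let A : (↥D → ℝ) →ₗ[ℝ] (↥D → ℝ) :=
    { toFun := fun v x => -(lap G μ (ext v) x)
      map_add' := by
        intro v w
        funext x
        have h : ext (v + w) = fun z => ext v z + ext w z := by
          funext z
          have := hext_eq v w 1 1 z
          simpa using this
        show -(lap G μ (ext (v + w)) ↑x) = -(lap G μ (ext v) ↑x) + -(lap G μ (ext w) ↑x)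
        rw [h, lap_add']
        ring
      map_smul' := by
        intro a v
        funext x
        have h : ext (a • v) = fun z => a * ext v z := by
          funext z
          have := hext_eq v v a 0 z
          simpa using this
        show -(lap G μ (ext (a • v)) ↑x) = a * -(lap G μ (ext v) ↑x)
        rw [h, lap_smul']
        ring }
  have hA : ∀ (v : ↥D → ℝ) (x : ↥D), A v x = -(lap G μ (ext v) x) := fun _ _ => rfl
  have hinj : Function.Injective A := by
    rw [injective_iff_map_eq_zero]
    intro v hv
    by_contra hvne
    obtain ⟨x₀, hx₀⟩ := Function.ne_iff.mp hvne
    set u := ext v with hu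
    have hu0 : ∀ x, x ∉ D → u x = 0 := fun x hx => dif_neg hx
    have hux₀ : u ↑x₀ ≠ 0 := by
      have : u ↑x₀ = v x₀ := by simp [hu, hext, x₀.2]
      rw [this]; simpa using hx₀
    have hlap0 : ∀ x ∈ D, lap G μ u x = 0 := by
      intro x hx
      have h := congrFun hv ⟨x, hx⟩
      rw [hA] at h
      simpa [neg_eq_zero] using h
    have hq := lambda1_le_quot G μ hl D u ⟨↑x₀, x₀.2, hux₀⟩ hu0
    have hnum : (∑ x ∈ D, (-lap G μ u x) * u x * deg G μ x) = 0 :=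
      Finset.sum_eq_zero fun x hx => by rw [hlap0 x hx]; ring
    rw [hnum, zero_div] at hq
    have h2 := lam_lb G μ hl D ⟨↑x₀, x₀.2⟩
    rw [← hcdef] at h2
    linarith
  obtain ⟨v, hv⟩ := (LinearMap.injective_iff_surjective).mp hinj
    (fun x : ↥D => if (x : V) = y then 1 else 0)
  set u := ext v with hu
  have hu0 : ∀ x, x ∉ D → u x = 0 := fun x hx => dif_neg hx
  have heq : ∀ x ∈ D, lap G μ u x = -(if x = y then 1 else 0) := by
    intro x hx
    have h := congrFun hv ⟨x, hx⟩
    rw [hA] at h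
    simp only at h
    rw [← h, neg_neg]
  have hnn : ∀ x, 0 ≤ u x := by
    apply min_principle G μ hpos hconn u D (fun x hx => (hu0 x hx).ge)
    intro x hx
    rw [heq x hx]
    split <;> norm_num
  have hdy : 0 < deg G μ y := deg_pos G μ hpos hconn y
  have hcpos : 0 < c := hl
  have hnz : ∃ x ∈ D, u x ≠ 0 := by
    by_contra h
    push_neg at h
    have hzero : u = fun _ => 0 := funext fun x => if hx : x ∈ D then h x hx else hu0 x hx
    have := heq y hy
    rw [hzero, if_pos rfl] at this
    simp [lap] at this
  have hq := lambda1_le_quot G μ hl D u hnz hu0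
  have h2 := lam_lb G μ hl D ⟨y, hy⟩
  rw [← hcdef] at h2
  set den := ∑ x ∈ D, (u x) ^ 2 * deg G μ x with hden
  have hnum : (∑ x ∈ D, (-lap G μ u x) * u x * deg G μ x) = u y * deg G μ y := by
    have : ∀ x ∈ D, (-lap G μ u x) * u x * deg G μ x
        = if x = y then u x * deg G μ x else 0 := by
      intro x hx
      rw [heq x hx, neg_neg]
      split <;> ring
    rw [Finset.sum_congr rfl this, Finset.sum_ite_eq' D y (fun x => u x * deg G μ x), if_pos hy]
  rw [hnum] at hq
  have hdpos : ∀ x ∈ D, (0:ℝ) ≤ (u x) ^ 2 * deg G μ x := by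
    intro x _
    have := deg_pos G μ hpos hconn x
    positivity
  have hdenpos : 0 < den := by
    obtain ⟨x₀, hx₀D, hx₀⟩ := hnz
    apply Finset.sum_pos' hdpos
    refine ⟨x₀, hx₀D, ?_⟩
    have := deg_pos G μ hpos hconn x₀
    positivity
  have hco : c * den ≤ u y * deg G μ y := by
    have h3 : c ≤ u y * deg G μ y / den := le_trans h2 hq
    calc c * den ≤ (u y * deg G μ y / den) * den := by
          exact mul_le_mul_of_nonneg_right h3 hdenpos.le
      _ = u y * deg G μ y := div_mul_cancel₀ _ hdenpos.ne'
  have hden_y : (u y) ^ 2 * deg G μ y ≤ den :=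
    Finset.single_le_sum hdpos hy
  have h1c : c * u y ≤ 1 := by
    rcases eq_or_lt_of_le (hnn y) with h | h
    · rw [← h]; simp
    · nlinarith [mul_pos h hdy]
  refine ⟨u, hu0, heq, hnn, ?_⟩
  intro x
  by_cases hx : x ∈ D
  · have hxle : (u x) ^ 2 * deg G μ x ≤ den := Finset.single_le_sum hdpos hx
    nlinarith [hnn y, hdy.le]
  · rw [hu0 x hx]
    simpa using hdy.le

include hpos hconn in
lemma exists_green_global [Countable V] (hl : 0 < lambda1Top G μ (fun _ => 0)) (y : V) :
    ∃ L : V → ℝ, (∀ x, 0 ≤ L x) ∧ (∀ x, lap G μ L x = -(if x = y then 1 else 0)) := by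
  classical
  haveI : Encodable V := Encodable.ofCountable V
  haveI : Denumerable V := Denumerable.ofEncodableOfInfinite V
  set e : V ≃ ℕ := Denumerable.eqv V with he
  set c := lambda1Top G μ (fun _ => 0) with hc
  set D : ℕ → Finset V := fun n => (Finset.range (e y + 1 + n)).image e.symm with hD
  have hyD : ∀ n, y ∈ D n := fun n =>
    Finset.mem_image.mpr ⟨e y, Finset.mem_range.mpr (by omega), e.symm_apply_apply y⟩
  have hmemD : ∀ (x : V) (n : ℕ), e x < e y + 1 + n → x ∈ D n := fun x n h =>
    Finset.mem_image.mpr ⟨e x, Finset.mem_range.mpr h, e.symm_apply_apply x⟩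
  have hDsub : ∀ n, D n ⊆ D (n + 1) :=
    fun n => Finset.image_subset_image (Finset.range_subset_range.mpr (by omega))
  choose K h0 heq hnn hbd using fun n => exists_green_on G μ hpos hconn hl (D n) y (hyD n)
  have hcpos : 0 < c := hl
  set M : V → ℝ := fun x => Real.sqrt (deg G μ y / (c ^ 2 * deg G μ x)) with hM
  have hKM : ∀ n x, K n x ≤ M x := by
    intro n x
    have hb := hbd n x
    have hdx := deg_pos G μ hpos hconn x
    have h2 : (K n x) ^ 2 ≤ deg G μ y / (c ^ 2 * deg G μ x) := by
      rw [le_div_iff₀ (by positivity)]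
      nlinarith [hb]
    calc K n x = Real.sqrt ((K n x) ^ 2) := (Real.sqrt_sq (hnn n x)).symm
      _ ≤ M x := Real.sqrt_le_sqrt h2
  have hmono : ∀ n x, K n x ≤ K (n + 1) x := by
    intro n
    have hmp := min_principle G μ hpos hconn (fun z => K (n + 1) z - K n z) (D n)
      (by intro x hx
          have h1 := hnn (n + 1) x
          have h00 := h0 n x hx
          linarith)
      (by intro x hx
          have e1 := heq n x hx
          have e2 := heq (n + 1) x (hDsub n hx)
          have hls : lap G μ (fun z => K (n + 1) z - K n z) x
              = lap G μ (K (n + 1)) x - lap G μ (K n) x := lap_sub G μ (K (n + 1)) (K n) x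
          rw [hls, e1, e2]
          simp)
    intro x
    have := hmp x
    linarith
  have hmonoX : ∀ x, Monotone fun n => K n x :=
    fun x => monotone_nat_of_le_succ fun n => hmono n x
  have hbdd : ∀ x, BddAbove (Set.range fun n => K n x) :=
    fun x => ⟨M x, by rintro r ⟨n, rfl⟩; exact hKM n x⟩
  set L : V → ℝ := fun x => ⨆ n, K n x with hL
  have htend : ∀ x, Tendsto (fun n => K n x) atTop (nhds (L x)) :=
    fun x => tendsto_atTop_ciSup (hmonoX x) (hbdd x)
  refine ⟨L, ?_, ?_⟩
  · intro x
    exact le_trans (hnn 0 x) (le_ciSup (hbdd x) 0)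
  · intro x
    have ht1 : Tendsto (fun n => lap G μ (K n) x) atTop (nhds (lap G μ L x)) := by
      simp only [lap]
      apply tendsto_finset_sum
      intro z _
      exact ((htend z).sub (htend x)).const_mul _
    have ht2 : Tendsto (fun n => lap G μ (K n) x) atTop (nhds (-(if x = y then 1 else 0))) := by
      apply Tendsto.congr' _ tendsto_const_nhds
      filter_upwards [eventually_ge_atTop (e x)] with n hn
      exact (heq n x (hmemD x n (by omega))).symm
    exact tendsto_nhds_unique ht1 ht2

end Exist

/-- `H` is the Dirichlet Green function of the ball `B(j) = {x | d(x,x₀) < j}`: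
it is nonnegative, and for every `y ∈ B(j)` one has `Δ_x H(x,y) = -δ_y(x)` for
`x ∈ B(j)` and `H(x,y) = 0` for `x ∉ B(j)`. -/
def IsDirichletGreenOnBall (G : SimpleGraph V) [G.LocallyFinite] [DecidableEq V]
    (μ : V → V → ℝ) (x₀ : V) (j : ℕ) (H : V → V → ℝ) : Prop :=
  (∀ x y, 0 ≤ H x y) ∧
  ∀ y, G.dist y x₀ < j →
    (∀ x, G.dist x x₀ < j → lap G μ (fun z => H z y) x = -(if x = y then 1 else 0)) ∧
    (∀ x, ¬ G.dist x x₀ < j → H x y = 0)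

/-- Positive spectral gap implies existence of a Green function: if
`λ₁(X) := λ₁(X, -Δ) > 0` (potential `Q = 0`), then `X` has a global Green
function: some `G : X × X → [0,∞)` with `Δ_x G(x,y) = -δ_y(x)` for all `x, y`. -/
theorem green_exists_of_spectral_gap {V : Type*} [Countable V]
    [DecidableEq V] (G : SimpleGraph V) [G.LocallyFinite]
    (μ : V → V → ℝ) (hsymm : ∀ x y, μ x y = μ y x)
    (hpos : ∀ x y, G.Adj x y → 0 < μ x y) (hconn : G.Connected)
    (hl : 0 < lambda1Top G μ fun _ => 0) :
    ∃ Ggl : V → V → ℝ,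
      (∀ x y, 0 ≤ Ggl x y) ∧
      (∀ y x, lap G μ (fun z => Ggl z y) x = -(if x = y then 1 else 0)) := by
  haveI : Infinite V := infinite_of_hl G μ hl
  choose L hL1 hL2 using fun y => exists_green_global G μ hpos hconn hl y
  exact ⟨fun x y => L y x, fun x y => hL1 y x, fun y x => hL2 y x⟩
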